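/- Let d ≥ 2, β > 0, κ > 0 and C_G > 0, and let G : ℝ^d → [0,∞) be a probability density that is radially symmetric (G(v) depends only on |v|), satisfies G(v) ≤ C_G (1+|v|)^{−d−β} for all v, and |v|^{d+β} G(v) → κ as |v| → ∞. Define G₁(x) = 2 ∫₀^∞ t^{−d} e^{−t} G(x/t) dt for x ∈ ℍ = { v ∈ ℝ^d : v·e₁ > 0 }. Then (i) |x|^{d+β} G₁(x) → 2 Γ(β+1) κ as |x| → ∞ (x ∈ ℍ), and (ii) there exists a constant C > 0 such that G₁(x) ≤ C · min( |x|^{1−d}, |x|^{−β−d} ) for all x ∈ ℍ. -/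

import Mathlib

open Metric Set MeasureTheory Filter
open scoped RealInnerProductSpace Topology

noncomputable section

/-- The first vector of the canonical basis of `ℝ^d`. -/
def e1 (d : ℕ) : EuclideanSpace ℝ (Fin d) :=
  if h : 0 < d then EuclideanSpace.single (⟨0, h⟩ : Fin d) 1 else 0

/-- `G₁(x) = 2∫₀^∞ t^{−d} e^{−t} G(x/t) dt`, the density of `E·W` with `E ∼ Exp(1)` and
`W ∼ 2G(v)1_{v·e₁>0}`, for `x` in the half-space `ℍ`. -/
def Gone (d : ℕ) (G : EuclideanSpace ℝ (Fin d) → ℝ) (x : EuclideanSpace ℝ (Fin d)) : ℝ :=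
  2 * ∫ t in Set.Ioi (0 : ℝ), t ^ (-(d : ℝ)) * Real.exp (-t) * G (t⁻¹ • x)

/-- A radial a.e.-measurable function on `ℝ^d` gives an a.e.-measurable profile on `(0,∞)`. -/
lemma aux_meas {d : ℕ} (hd : 0 < d) (g : ℝ → ℝ)
    (h : AEStronglyMeasurable (fun v : EuclideanSpace ℝ (Fin d) => g ‖v‖)
      (volume : Measure (EuclideanSpace ℝ (Fin d)))) :
    AEMeasurable g (volume.restrict (Ioi (0:ℝ))) := by
  haveI : Nonempty (Fin d) := ⟨⟨0, hd⟩⟩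
  set E := EuclideanSpace ℝ (Fin d)
  haveI : Nontrivial E := by
    refine ⟨0, EuclideanSpace.single ⟨0, hd⟩ (1:ℝ), ?_⟩
    intro hcon
    have h0 := congrArg (fun v : E => v ⟨0, hd⟩) hcon
    simp only [EuclideanSpace.single_apply, if_pos rfl] at h0
    exact zero_ne_one (α := ℝ) (by simpa using h0)
  set μ : Measure E := volume with hμ
  -- step 1 : to comap on {0}ᶜ
  have h1 : AEStronglyMeasurable (fun x : ({(0:E)}ᶜ : Set E) => g ‖x.1‖)
      (μ.comap Subtype.val) := by
    have hms : MeasurableSet ({(0:E)}ᶜ : Set E) := (measurableSet_singleton 0).compl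
    have := (MeasurableEmbedding.subtype_coe hms).aestronglyMeasurable_map_iff
      (μ := μ.comap Subtype.val) (g := fun v : E => g ‖v‖)
    rw [map_comap_subtype_coe hms] at this
    exact this.1 h.restrict
  -- step 2 : transfer via polar coordinates
  have h2 : AEStronglyMeasurable
      (fun p : sphere (0:E) 1 × Ioi (0:ℝ) => g p.2.1)
      (μ.toSphere.prod (Measure.volumeIoiPow (Module.finrank ℝ E - 1))) := by
    have hmp := Measure.measurePreserving_homeomorphUnitSphereProd μ
    rw [← hmp.map_eq]
    rw [(Homeomorph.measurableEmbedding (homeomorphUnitSphereProd E)).aestronglyMeasurable_map_iff]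
    refine h1.congr ?_
    refine Filter.Eventually.of_forall fun x => ?_
    simp [Function.comp]
  -- step 3 : slice
  have h3 := h2.prodMk_left
  have hne : μ.toSphere ≠ 0 := by
    intro hcon
    have h4 : μ.toSphere univ = 0 := by rw [hcon]; rfl
    rw [Measure.toSphere_apply_univ] at h4
    rcases mul_eq_zero.1 h4 with hc | hc
    · exact (Nat.cast_ne_zero.2 (Module.finrank_pos (R := ℝ) (M := E)).ne') hc
    · exact (measure_ball_pos μ (0:E) one_pos).ne' hc
  haveI : NeZero μ.toSphere := ⟨hne⟩
  obtain ⟨σ, hσ⟩ := h3.exists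
  have h4 : AEStronglyMeasurable (fun r : Ioi (0:ℝ) => g r.1)
      (Measure.volumeIoiPow (Module.finrank ℝ E - 1)) := hσ
  -- step 4 : down to comap measure
  have h5 : AEStronglyMeasurable (fun r : Ioi (0:ℝ) => g r.1)
      ((volume : Measure ℝ).comap Subtype.val) := by
    refine h4.mono_ac ?_
    refine withDensity_absolutelyContinuous' ?_ ?_
    · exact (measurable_subtype_coe.pow_const _).ennreal_ofReal.aemeasurable
    · refine Filter.Eventually.of_forall fun r => ?_
      simp only [ne_eq, ENNReal.ofReal_eq_zero, not_le]
      exact pow_pos r.2 _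
  -- step 5 : to restrict
  have hms : MeasurableSet (Ioi (0:ℝ)) := measurableSet_Ioi
  have h6 : AEStronglyMeasurable g ((volume : Measure ℝ).restrict (Ioi 0)) := by
    rw [← map_comap_subtype_coe hms]
    exact ((MeasurableEmbedding.subtype_coe hms).aestronglyMeasurable_map_iff).2 h5
  exact h6.aemeasurable

/-- Composition with `t ↦ r / t` preserves a.e. measurability on `(0,∞)`. -/
lemma aux_comp {g : ℝ → ℝ} (hg : AEMeasurable g (volume.restrict (Ioi (0:ℝ))))
    {r : ℝ} (hr : 0 < r) :
    AEMeasurable (fun t => g (r / t)) (volume.restrict (Ioi (0:ℝ))) := by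
  obtain ⟨g₀, hg₀m, hg₀e⟩ := hg
  set N : Set ℝ := {s | g s ≠ g₀ s} ∩ Ioi 0 with hN
  have hNnull : volume N = 0 := by
    have h0 := ae_iff.1 hg₀e
    rwa [Measure.restrict_apply' measurableSet_Ioi] at h0
  have hdiff : DifferentiableOn ℝ (fun s : ℝ => r / s) N :=
    (differentiableOn_const r).div differentiableOn_id (fun s hs => ne_of_gt hs.2)
  have himg : volume ((fun s : ℝ => r / s) '' N) = 0 :=
    addHaar_image_eq_zero_of_differentiableOn_of_addHaar_eq_zero volume hdiff hNnull
  refine ⟨fun t => g₀ (r / t), hg₀m.comp (measurable_const.div measurable_id), ?_⟩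
  have hae : ∀ᵐ t : ℝ ∂volume, t ∉ (fun s : ℝ => r / s) '' N := by
    rw [ae_iff]
    simp only [not_not, Set.setOf_mem_eq]
    exact himg
  rw [Filter.EventuallyEq, ae_restrict_iff' measurableSet_Ioi]
  filter_upwards [hae] with t htn htpos
  by_contra hne
  refine htn ⟨r / t, ⟨hne, mem_Ioi.2 (div_pos hr htpos)⟩, ?_⟩
  field_simp

/-- Integrability of `s^β (1+s)^{-d-β}` on `(0,∞)`. -/
lemma aux_I2 {d : ℕ} (hd : 2 ≤ d) {β : ℝ} (hβ : 0 < β) :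
    IntegrableOn (fun s : ℝ => s ^ β * (1 + s) ^ (-(d:ℝ) - β)) (Ioi (0:ℝ)) := by
  have hmeas : ∀ s : Set ℝ, s ⊆ Ioi 0 → MeasurableSet s →
      AEStronglyMeasurable (fun s : ℝ => s ^ β * (1 + s) ^ (-(d:ℝ) - β))
        (volume.restrict s) := by
    intro s hs hms
    refine ContinuousOn.aestronglyMeasurable ?_ hms
    refine ContinuousOn.mul ?_ ?_
    · exact continuousOn_id.rpow_const fun x hx => Or.inl (ne_of_gt (hs hx))
    · exact (continuousOn_const.add continuousOn_id).rpow_const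
        fun x hx => Or.inl (by have := hs hx; simp only [mem_Ioi] at this; show (1:ℝ) + x ≠ 0; positivity)
  have h1 : IntegrableOn (fun s : ℝ => s ^ β * (1 + s) ^ (-(d:ℝ) - β)) (Ioc (0:ℝ) 1) := by
    have hb : IntegrableOn (fun s : ℝ => s ^ β) (Ioc (0:ℝ) 1) := by
      have := intervalIntegral.intervalIntegrable_rpow' (a := 0) (b := 1)
        (show (-1:ℝ) < β by linarith)
      rwa [intervalIntegrable_iff_integrableOn_Ioc_of_le zero_le_one] at this
    refine hb.mono' (hmeas _ Ioc_subset_Ioi_self measurableSet_Ioc) ?_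
    filter_upwards [ae_restrict_mem measurableSet_Ioc] with s hs
    have hs0 : 0 < s := hs.1
    have hpow : (1 + s) ^ (-(d:ℝ) - β) ≤ 1 :=
      Real.rpow_le_one_of_one_le_of_nonpos (by linarith) (by
        have : (0:ℝ) ≤ d := Nat.cast_nonneg d
        linarith)
    rw [Real.norm_eq_abs, abs_of_nonneg (mul_nonneg (Real.rpow_nonneg hs0.le _)
      (Real.rpow_nonneg (by linarith) _))]
    calc s ^ β * (1 + s) ^ (-(d:ℝ) - β) ≤ s ^ β * 1 :=
          mul_le_mul_of_nonneg_left hpow (Real.rpow_nonneg hs0.le _)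
      _ = s ^ β := mul_one _
  have h2 : IntegrableOn (fun s : ℝ => s ^ β * (1 + s) ^ (-(d:ℝ) - β)) (Ioi (1:ℝ)) := by
    have hb : IntegrableOn (fun s : ℝ => s ^ (-(d:ℝ))) (Ioi (1:ℝ)) :=
      integrableOn_Ioi_rpow_of_lt (by
        have : (2:ℝ) ≤ d := by exact_mod_cast hd
        linarith) one_pos
    refine hb.mono' (hmeas _ (fun x hx => mem_Ioi.2 (lt_trans one_pos (mem_Ioi.1 hx))) measurableSet_Ioi) ?_
    filter_upwards [ae_restrict_mem measurableSet_Ioi] with s hs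
    have hs0 : (0:ℝ) < s := lt_trans one_pos hs
    rw [Real.norm_eq_abs, abs_of_nonneg (mul_nonneg (Real.rpow_nonneg hs0.le _)
      (Real.rpow_nonneg (by linarith) _))]
    have hpow : (1 + s) ^ (-(d:ℝ) - β) ≤ s ^ (-(d:ℝ) - β) :=
      Real.rpow_le_rpow_of_nonpos hs0 (by linarith) (by
        have : (0:ℝ) ≤ d := Nat.cast_nonneg d
        linarith)
    calc s ^ β * (1 + s) ^ (-(d:ℝ) - β) ≤ s ^ β * s ^ (-(d:ℝ) - β) :=
          mul_le_mul_of_nonneg_left hpow (Real.rpow_nonneg hs0.le _)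
      _ = s ^ (-(d:ℝ)) := by
          rw [← Real.rpow_add hs0]
          congr 1
          ring
  have : Ioi (0:ℝ) = Ioc 0 1 ∪ Ioi 1 := (Ioc_union_Ioi_eq_Ioi zero_le_one).symm
  rw [this]
  exact h1.union h2

/-- if `G` is a radially symmetric probability density with
`G(v) ≤ C_G (1+|v|)^{−d−β}` and `|v|^{d+β} G(v) → κ`, then
(i) `|x|^{d+β} G₁(x) → 2Γ(β+1)κ` as `|x| → ∞` in `ℍ`, and
(ii) there is `C > 0` with `G₁(x) ≤ C min(|x|^{1−d}, |x|^{−β−d})` on `ℍ`. -/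
theorem stmt_18 (d : ℕ) (hd : 2 ≤ d) (β κ C_G : ℝ)
    (hβ : 0 < β) (hκ : 0 < κ) (hCG : 0 < C_G)
    (G : EuclideanSpace ℝ (Fin d) → ℝ)
    (hGnn : ∀ v, 0 ≤ G v)
    (hGprob : ∫ v, G v = 1)
    (hGrad : ∀ u v : EuclideanSpace ℝ (Fin d), ‖u‖ = ‖v‖ → G u = G v)
    (hGbd : ∀ v : EuclideanSpace ℝ (Fin d), G v ≤ C_G * (1 + ‖v‖) ^ (-(d : ℝ) - β))
    (hGasym : Tendsto (fun v : EuclideanSpace ℝ (Fin d) => ‖v‖ ^ ((d : ℝ) + β) * G v)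
      (cocompact (EuclideanSpace ℝ (Fin d))) (𝓝 κ)) :
    (∀ ε : ℝ, 0 < ε → ∃ R : ℝ, ∀ x : EuclideanSpace ℝ (Fin d),
      0 < ⟪x, e1 d⟫ → R ≤ ‖x‖ →
        |‖x‖ ^ ((d : ℝ) + β) * Gone d G x - 2 * Real.Gamma (β + 1) * κ| ≤ ε) ∧
    ∃ C : ℝ, 0 < C ∧ ∀ x : EuclideanSpace ℝ (Fin d), 0 < ⟪x, e1 d⟫ →
      Gone d G x ≤ C * min (‖x‖ ^ (1 - (d : ℝ))) (‖x‖ ^ (-β - (d : ℝ))) := by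
  have hd0 : 0 < d := lt_of_lt_of_le two_pos hd
  have hdR : (2:ℝ) ≤ d := by exact_mod_cast hd
  have he1 : ‖e1 d‖ = 1 := by
    rw [e1, dif_pos hd0]
    simp [EuclideanSpace.norm_single]
  set g : ℝ → ℝ := fun s => G (s • e1 d) with hgdef
  have hnorm_smul : ∀ s : ℝ, 0 ≤ s → ‖s • e1 d‖ = s := by
    intro s hs
    rw [norm_smul, he1, mul_one, Real.norm_eq_abs, abs_of_nonneg hs]
  have hGg : ∀ v : EuclideanSpace ℝ (Fin d), G v = g ‖v‖ := by
    intro v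
    exact hGrad v (‖v‖ • e1 d) (hnorm_smul ‖v‖ (norm_nonneg v)).symm
  have hgnn : ∀ s, 0 ≤ g s := fun s => hGnn _
  have hgbd : ∀ s : ℝ, 0 ≤ s → g s ≤ C_G * (1 + s) ^ (-(d:ℝ) - β) := by
    intro s hs
    have := hGbd (s • e1 d)
    rwa [hnorm_smul s hs] at this
  -- integrability of G, hence a.e. measurability of g
  have hGint : Integrable G (volume : Measure (EuclideanSpace ℝ (Fin d))) := by
    by_contra hni
    rw [integral_undef hni] at hGprob
    exact zero_ne_one hGprob
  have hg_meas : AEMeasurable g (volume.restrict (Ioi (0:ℝ))) := by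
    refine aux_meas hd0 g ?_
    have : (fun v : EuclideanSpace ℝ (Fin d) => g ‖v‖) = G := funext fun v => (hGg v).symm
    rw [this]
    exact hGint.aestronglyMeasurable
  -- Gone only depends on the norm
  set Φ : ℝ → ℝ := fun r => 2 * ∫ t in Ioi (0:ℝ), t ^ (-(d:ℝ)) * Real.exp (-t) * g (r / t)
    with hΦdef
  have hGoneΦ : ∀ x : EuclideanSpace ℝ (Fin d), Gone d G x = Φ ‖x‖ := by
    intro x
    rw [Gone, hΦdef]
    congr 1
    refine setIntegral_congr_fun measurableSet_Ioi ?_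
    intro t ht
    simp only
    congr 1
    rw [hGg (t⁻¹ • x)]
    congr 1
    rw [norm_smul, norm_inv, Real.norm_eq_abs, abs_of_pos ht, div_eq_inv_mul]
  -- the Gamma integrand is integrable
  have hGam : IntegrableOn (fun t : ℝ => Real.exp (-t) * t ^ β) (Ioi (0:ℝ)) := by
    have := Real.GammaIntegral_convergent (show (0:ℝ) < β + 1 by linarith)
    simpa using this
  have hGamVal : ∫ t in Ioi (0:ℝ), Real.exp (-t) * t ^ β = Real.Gamma (β + 1) := by
    rw [Real.Gamma_eq_integral (show (0:ℝ) < β + 1 by linarith)]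
    simp
  -- exponent bookkeeping
  have hexp : ∀ t : ℝ, 0 < t →
      t ^ (-(d:ℝ)) * t ^ ((d:ℝ) + β) = t ^ β := by
    intro t ht
    rw [← Real.rpow_add ht]
    congr 1
    ring
  constructor
  · -- part (i)
    -- the profile tail limit
    have hψ : Tendsto (fun s : ℝ => s ^ ((d:ℝ) + β) * g s) atTop (𝓝 κ) := by
      have h1 : Tendsto (fun s : ℝ => s • e1 d) atTop
          (cocompact (EuclideanSpace ℝ (Fin d))) := by
        rw [← cobounded_eq_cocompact, ← tendsto_norm_atTop_iff_cobounded]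
        refine tendsto_atTop_mono (fun s => ?_) tendsto_id
        rw [norm_smul, he1, mul_one]
        exact le_abs_self s
      have h2 := hGasym.comp h1
      refine h2.congr' ?_
      filter_upwards [eventually_ge_atTop (0:ℝ)] with s hs
      simp only [Function.comp_apply, hnorm_smul s hs]
      rfl
    have hDCT : Tendsto
        (fun r : ℝ => ∫ t in Ioi (0:ℝ),
          Real.exp (-t) * t ^ β * ((r / t) ^ ((d:ℝ) + β) * g (r / t)))
        atTop (𝓝 (∫ t in Ioi (0:ℝ), Real.exp (-t) * t ^ β * κ)) := by
      refine tendsto_integral_filter_of_dominated_convergence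
        (fun t => C_G * (Real.exp (-t) * t ^ β)) ?_ ?_ ?_ ?_
      · -- a.e. strong measurability
        filter_upwards [eventually_gt_atTop (0:ℝ)] with r hr
        have hgc := aux_comp hg_meas hr
        have hc1 : AEMeasurable (fun t : ℝ => Real.exp (-t) * t ^ β *
            ((r / t) ^ ((d:ℝ) + β))) (volume.restrict (Ioi 0)) := by
          refine (ContinuousOn.aestronglyMeasurable ?_ measurableSet_Ioi).aemeasurable
          refine ContinuousOn.mul ?_ ?_
          · exact ((Real.continuous_exp.comp continuous_neg).continuousOn).mul
              (continuousOn_id.rpow_const fun x hx => Or.inl (ne_of_gt hx))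
          · exact (continuousOn_const.div continuousOn_id
              fun x hx => ne_of_gt hx).rpow_const
              fun x hx => Or.inr (by positivity)
        have := hc1.mul hgc
        refine this.aestronglyMeasurable.congr ?_
        refine Filter.Eventually.of_forall fun t => ?_
        simp only [Pi.mul_apply]
        ring
      · -- domination
        filter_upwards [eventually_gt_atTop (0:ℝ)] with r hr
        filter_upwards [ae_restrict_mem measurableSet_Ioi] with t ht
        have ht0 : (0:ℝ) < t := ht
        have hs0 : 0 < r / t := div_pos hr ht0
        have hfac : 0 ≤ Real.exp (-t) * t ^ β :=
          mul_nonneg (Real.exp_nonneg _) (Real.rpow_nonneg ht0.le _)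
        have hub : (r / t) ^ ((d:ℝ) + β) * g (r / t) ≤ C_G := by
          set s := r / t
          have h1 : s ^ ((d:ℝ) + β) * g s ≤ s ^ ((d:ℝ) + β) *
              (C_G * (1 + s) ^ (-(d:ℝ) - β)) :=
            mul_le_mul_of_nonneg_left (hgbd s hs0.le) (Real.rpow_nonneg hs0.le _)
          have h2 : s ^ ((d:ℝ) + β) * (1 + s) ^ (-(d:ℝ) - β) ≤ 1 := by
            have hss : s ^ ((d:ℝ) + β) ≤ (1 + s) ^ ((d:ℝ) + β) :=
              Real.rpow_le_rpow hs0.le (by linarith) (by positivity)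
            have h1s : (0:ℝ) < 1 + s := by linarith
            have hrw : (1 + s) ^ (-(d:ℝ) - β) = ((1 + s) ^ ((d:ℝ) + β))⁻¹ := by
              rw [← Real.rpow_neg h1s.le]
              congr 1
              ring
            rw [hrw]
            rw [mul_inv_le_iff₀ (Real.rpow_pos_of_pos h1s _), one_mul]
            exact hss
          calc s ^ ((d:ℝ) + β) * g s ≤ s ^ ((d:ℝ) + β) * (C_G * (1 + s) ^ (-(d:ℝ) - β)) := h1
            _ = C_G * (s ^ ((d:ℝ) + β) * (1 + s) ^ (-(d:ℝ) - β)) := by ring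
            _ ≤ C_G * 1 := mul_le_mul_of_nonneg_left h2 hCG.le
            _ = C_G := mul_one _
        have hlb : 0 ≤ (r / t) ^ ((d:ℝ) + β) * g (r / t) :=
          mul_nonneg (Real.rpow_nonneg hs0.le _) (hgnn _)
        rw [Real.norm_eq_abs, abs_of_nonneg (mul_nonneg hfac hlb)]
        calc Real.exp (-t) * t ^ β * ((r / t) ^ ((d:ℝ) + β) * g (r / t))
            ≤ Real.exp (-t) * t ^ β * C_G := mul_le_mul_of_nonneg_left hub hfac
          _ = C_G * (Real.exp (-t) * t ^ β) := by ring
      · exact hGam.const_mul C_G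
      · -- pointwise limit
        filter_upwards [ae_restrict_mem measurableSet_Ioi] with t ht
        have ht0 : (0:ℝ) < t := ht
        have hdiv : Tendsto (fun r : ℝ => r / t) atTop atTop :=
          tendsto_id.atTop_div_const ht0
        have := (hψ.comp hdiv).const_mul (Real.exp (-t) * t ^ β)
        simpa [Function.comp] using this
    have hval : ∫ t in Ioi (0:ℝ), Real.exp (-t) * t ^ β * κ
        = Real.Gamma (β + 1) * κ := by
      rw [integral_mul_const, hGamVal]
    rw [hval] at hDCT
    have hlim : Tendsto (fun r : ℝ => r ^ ((d:ℝ) + β) * Φ r) atTop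
        (𝓝 (2 * Real.Gamma (β + 1) * κ)) := by
      have h2 : Tendsto (fun r : ℝ => 2 * ∫ t in Ioi (0:ℝ),
          Real.exp (-t) * t ^ β * ((r / t) ^ ((d:ℝ) + β) * g (r / t)))
          atTop (𝓝 (2 * (Real.Gamma (β + 1) * κ))) := hDCT.const_mul 2
      rw [show 2 * Real.Gamma (β + 1) * κ = 2 * (Real.Gamma (β + 1) * κ) by ring]
      refine h2.congr' ?_
      filter_upwards [eventually_gt_atTop (0:ℝ)] with r hr
      rw [hΦdef]
      simp only
      rw [← mul_assoc, mul_comm (r ^ ((d:ℝ) + β)) 2, mul_assoc]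
      congr 1
      rw [← integral_const_mul]
      refine setIntegral_congr_fun measurableSet_Ioi ?_
      intro t ht
      have ht0 : (0:ℝ) < t := ht
      simp only
      have hrt : (r / t) ^ ((d:ℝ) + β) = r ^ ((d:ℝ) + β) * (t ^ ((d:ℝ) + β))⁻¹ := by
        rw [Real.div_rpow hr.le ht0.le, div_eq_mul_inv]
      rw [hrt]
      have htβ : Real.exp (-t) * t ^ β * (r ^ ((d:ℝ) + β) * (t ^ ((d:ℝ) + β))⁻¹ * g (r / t))
          = r ^ ((d:ℝ) + β) * ((t ^ β * (t ^ ((d:ℝ) + β))⁻¹) * Real.exp (-t) * g (r / t)) := by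
        ring
      rw [htβ]
      congr 2
      have : t ^ β * (t ^ ((d:ℝ) + β))⁻¹ = t ^ (-(d:ℝ)) := by
        rw [← Real.rpow_neg ht0.le, ← Real.rpow_add ht0]
        congr 1
        ring
      rw [this]
    -- convert to ε-R form
    intro ε hε
    rw [Metric.tendsto_atTop] at hlim
    obtain ⟨R, hR⟩ := hlim ε hε
    refine ⟨R, fun x hx hxR => ?_⟩
    have := hR ‖x‖ hxR
    rw [Real.dist_eq] at this
    rw [hGoneΦ x]
    exact this.le
  · -- part (ii)
    set B : ℝ := ∫ s in Ioi (0:ℝ), s ^ β * (1 + s) ^ (-(d:ℝ) - β) with hBdef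
    have hB0 : 0 ≤ B := by
      rw [hBdef]
      refine setIntegral_nonneg measurableSet_Ioi fun s hs => ?_
      have hs0 : (0:ℝ) < s := hs
      positivity
    set c1 : ℝ := 2 * (C_G * Real.Gamma (β + 1)) with hc1def
    set c2 : ℝ := 2 * (C_G * B) with hc2def
    have hc1 : 0 ≤ c1 := by
      have := Real.Gamma_pos_of_pos (show (0:ℝ) < β + 1 by linarith)
      positivity
    have hc2 : 0 ≤ c2 := by positivity
    refine ⟨max c1 c2 + 1, by positivity, fun x hx => ?_⟩
    have hxne : x ≠ 0 := by
      intro hcon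
      rw [hcon] at hx
      simp at hx
    have hr : (0:ℝ) < ‖x‖ := norm_pos_iff.2 hxne
    set r : ℝ := ‖x‖ with hrdef
    rw [hGoneΦ x, ← hrdef]
    -- nonnegativity of the integrand
    have hnn : 0 ≤ᵐ[volume.restrict (Ioi (0:ℝ))]
        fun t : ℝ => t ^ (-(d:ℝ)) * Real.exp (-t) * g (r / t) := by
      filter_upwards [ae_restrict_mem measurableSet_Ioi] with t ht
      have ht0 : (0:ℝ) < t := ht
      have := hgnn (r / t)
      positivity
    -- bound 1 : ≤ c1 * r ^ (-β - d)
    have hb1 : Φ r ≤ c1 * r ^ (-β - (d:ℝ)) := by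
      have hle : ∫ t in Ioi (0:ℝ), t ^ (-(d:ℝ)) * Real.exp (-t) * g (r / t)
          ≤ ∫ t in Ioi (0:ℝ), (C_G * r ^ (-(d:ℝ) - β)) * (Real.exp (-t) * t ^ β) := by
        refine integral_mono_of_nonneg hnn ((hGam.const_mul _)) ?_
        filter_upwards [ae_restrict_mem measurableSet_Ioi] with t ht
        have ht0 : (0:ℝ) < t := ht
        have hs0 : 0 < r / t := div_pos hr ht0
        have h1 : g (r / t) ≤ C_G * (1 + r / t) ^ (-(d:ℝ) - β) := hgbd _ hs0.le
        have h2 : (1 + r / t) ^ (-(d:ℝ) - β) ≤ (r / t) ^ (-(d:ℝ) - β) := by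
          refine Real.rpow_le_rpow_of_nonpos hs0 (by linarith) ?_
          linarith
        have h3 : (r / t) ^ (-(d:ℝ) - β) = r ^ (-(d:ℝ) - β) * (t ^ (-(d:ℝ) - β))⁻¹ := by
          rw [Real.div_rpow hr.le ht0.le, div_eq_mul_inv]
        have h4 : t ^ (-(d:ℝ)) * (t ^ (-(d:ℝ) - β))⁻¹ = t ^ β := by
          rw [← Real.rpow_neg ht0.le, ← Real.rpow_add ht0]
          congr 1
          ring
        have hchain : t ^ (-(d:ℝ)) * Real.exp (-t) * g (r / t)
            ≤ t ^ (-(d:ℝ)) * Real.exp (-t) * (C_G * (r / t) ^ (-(d:ℝ) - β)) := by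
          refine mul_le_mul_of_nonneg_left ?_ (by positivity)
          exact h1.trans (mul_le_mul_of_nonneg_left h2 hCG.le)
        refine hchain.trans (le_of_eq ?_)
        rw [h3]
        calc t ^ (-(d:ℝ)) * Real.exp (-t) * (C_G * (r ^ (-(d:ℝ) - β) * (t ^ (-(d:ℝ) - β))⁻¹))
            = (C_G * r ^ (-(d:ℝ) - β)) * (Real.exp (-t) * (t ^ (-(d:ℝ)) * (t ^ (-(d:ℝ) - β))⁻¹)) := by
              ring
          _ = (C_G * r ^ (-(d:ℝ) - β)) * (Real.exp (-t) * t ^ β) := by rw [h4]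
      have hval2 : ∫ t in Ioi (0:ℝ), (C_G * r ^ (-(d:ℝ) - β)) * (Real.exp (-t) * t ^ β)
          = C_G * r ^ (-(d:ℝ) - β) * Real.Gamma (β + 1) := by
        rw [integral_const_mul, hGamVal]
      rw [hΦdef]
      simp only
      have := mul_le_mul_of_nonneg_left (hle.trans (le_of_eq hval2)) (by norm_num : (0:ℝ) ≤ 2)
      refine this.trans (le_of_eq ?_)
      rw [hc1def]
      rw [show (-(d:ℝ) - β) = (-β - (d:ℝ)) by ring]
      ring
    -- bound 2 : ≤ c2 * r ^ (1 - d)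
    have hb2 : Φ r ≤ c2 * r ^ (1 - (d:ℝ)) := by
      -- the comparison integrand
      have hIr : IntegrableOn (fun t : ℝ => t ^ β * (t + r) ^ (-(d:ℝ) - β)) (Ioi (0:ℝ)) := by
        have hiff := integrableOn_Ioi_comp_mul_left_iff
          (fun t : ℝ => t ^ β * (t + r) ^ (-(d:ℝ) - β)) 0 hr
        rw [mul_zero] at hiff
        rw [← hiff]
        have : IntegrableOn (fun s : ℝ => r ^ β * (r ^ (-(d:ℝ) - β) *
            (s ^ β * (1 + s) ^ (-(d:ℝ) - β)))) (Ioi (0:ℝ)) :=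
          ((aux_I2 hd hβ).const_mul _).const_mul _
        refine this.congr_fun ?_ measurableSet_Ioi
        intro s hs
        have hs0 : (0:ℝ) < s := hs
        simp only
        rw [Real.mul_rpow hr.le hs0.le]
        have : r * s + r = r * (1 + s) := by ring
        rw [this, Real.mul_rpow hr.le (by linarith)]
        ring
      -- substitution : value of the comparison integral
      have hsubst : ∫ t in Ioi (0:ℝ), t ^ β * (t + r) ^ (-(d:ℝ) - β)
          = r ^ (1 - (d:ℝ)) * B := by
        have hcomp := integral_comp_mul_left_Ioi
          (fun t : ℝ => t ^ β * (t + r) ^ (-(d:ℝ) - β)) 0 hr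
        rw [mul_zero] at hcomp
        have heq : ∫ s in Ioi (0:ℝ), (fun t : ℝ => t ^ β * (t + r) ^ (-(d:ℝ) - β)) (r * s)
            = r ^ (-(d:ℝ)) * B := by
          rw [hBdef, ← integral_const_mul]
          refine setIntegral_congr_fun measurableSet_Ioi ?_
          intro s hs
          have hs0 : (0:ℝ) < s := hs
          simp only
          rw [Real.mul_rpow hr.le hs0.le]
          have h5 : r * s + r = r * (1 + s) := by ring
          rw [h5, Real.mul_rpow hr.le (by linarith)]
          have h6 : r ^ β * (r ^ (-(d:ℝ) - β)) = r ^ (-(d:ℝ)) := by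
            rw [← Real.rpow_add hr]
            congr 1
            ring
          calc r ^ β * s ^ β * (r ^ (-(d:ℝ) - β) * (1 + s) ^ (-(d:ℝ) - β))
              = (r ^ β * r ^ (-(d:ℝ) - β)) * (s ^ β * (1 + s) ^ (-(d:ℝ) - β)) := by ring
            _ = r ^ (-(d:ℝ)) * (s ^ β * (1 + s) ^ (-(d:ℝ) - β)) := by rw [h6]
        rw [heq, smul_eq_mul] at hcomp
        have h7 : r * (r ^ (-(d:ℝ)) * B) = ∫ t in Ioi (0:ℝ), t ^ β * (t + r) ^ (-(d:ℝ) - β) := by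
          rw [hcomp, ← mul_assoc, mul_inv_cancel₀ hr.ne', one_mul]
        have h8 : r * r ^ (-(d:ℝ)) = r ^ (1 - (d:ℝ)) := by
          rw [sub_eq_add_neg, Real.rpow_add hr, Real.rpow_one]
        rw [← h7, ← mul_assoc, h8]
      have hle : ∫ t in Ioi (0:ℝ), t ^ (-(d:ℝ)) * Real.exp (-t) * g (r / t)
          ≤ ∫ t in Ioi (0:ℝ), C_G * (t ^ β * (t + r) ^ (-(d:ℝ) - β)) := by
        refine integral_mono_of_nonneg hnn (hIr.const_mul _) ?_
        filter_upwards [ae_restrict_mem measurableSet_Ioi] with t ht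
        have ht0 : (0:ℝ) < t := ht
        have hs0 : 0 < r / t := div_pos hr ht0
        have h1 : g (r / t) ≤ C_G * (1 + r / t) ^ (-(d:ℝ) - β) := hgbd _ hs0.le
        have h2 : 1 + r / t = (t + r) / t := by field_simp
        have h3 : ((t + r) / t) ^ (-(d:ℝ) - β)
            = (t + r) ^ (-(d:ℝ) - β) * (t ^ (-(d:ℝ) - β))⁻¹ := by
          rw [Real.div_rpow (by linarith) ht0.le, div_eq_mul_inv]
        have h4 : t ^ (-(d:ℝ)) * (t ^ (-(d:ℝ) - β))⁻¹ = t ^ β := by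
          rw [← Real.rpow_neg ht0.le, ← Real.rpow_add ht0]
          congr 1
          ring
        have hexp1 : Real.exp (-t) ≤ 1 := by
          rw [Real.exp_le_one_iff]
          linarith
        calc t ^ (-(d:ℝ)) * Real.exp (-t) * g (r / t)
            ≤ t ^ (-(d:ℝ)) * Real.exp (-t) * (C_G * (1 + r / t) ^ (-(d:ℝ) - β)) := by
              refine mul_le_mul_of_nonneg_left h1 ?_
              positivity
          _ ≤ t ^ (-(d:ℝ)) * 1 * (C_G * (1 + r / t) ^ (-(d:ℝ) - β)) := by
              refine mul_le_mul_of_nonneg_right ?_ ?_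
              · exact mul_le_mul_of_nonneg_left hexp1 (Real.rpow_nonneg ht0.le _)
              · have : (0:ℝ) < 1 + r / t := by linarith
                positivity
          _ = C_G * (t ^ β * (t + r) ^ (-(d:ℝ) - β)) := by
              rw [h2, h3, mul_one]
              calc t ^ (-(d:ℝ)) * (C_G * ((t + r) ^ (-(d:ℝ) - β) * (t ^ (-(d:ℝ) - β))⁻¹))
                  = C_G * ((t ^ (-(d:ℝ)) * (t ^ (-(d:ℝ) - β))⁻¹) * (t + r) ^ (-(d:ℝ) - β)) := by
                    ring
                _ = C_G * (t ^ β * (t + r) ^ (-(d:ℝ) - β)) := by rw [h4]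
      rw [hΦdef]
      simp only
      have hval3 : ∫ t in Ioi (0:ℝ), C_G * (t ^ β * (t + r) ^ (-(d:ℝ) - β))
          = C_G * (r ^ (1 - (d:ℝ)) * B) := by
        rw [integral_const_mul, hsubst]
      have := mul_le_mul_of_nonneg_left (hle.trans (le_of_eq hval3)) (by norm_num : (0:ℝ) ≤ 2)
      refine this.trans (le_of_eq ?_)
      rw [hc2def]
      ring
    -- combine
    have hmin : 0 ≤ r ^ (1 - (d:ℝ)) := Real.rpow_nonneg hr.le _
    have hmin2 : 0 ≤ r ^ (-β - (d:ℝ)) := Real.rpow_nonneg hr.le _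
    rw [mul_min_of_nonneg _ _ (by positivity : (0:ℝ) ≤ max c1 c2 + 1)]
    refine le_min ?_ ?_
    · refine hb2.trans ?_
      refine mul_le_mul_of_nonneg_right ?_ hmin
      calc c2 ≤ max c1 c2 := le_max_right _ _
        _ ≤ max c1 c2 + 1 := by linarith
    · refine hb1.trans ?_
      refine mul_le_mul_of_nonneg_right ?_ hmin2
      calc c1 ≤ max c1 c2 := le_max_left _ _
        _ ≤ max c1 c2 + 1 := by linarith
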